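/- Let H and K be finite connected graphs whose vertex sets intersect in exactly one vertex k and whose edge sets are disjoint, and let G = H ∪ K be their union. Let f : ℝ → ℝ be an odd function. Then a point x ∈ ℝ^{V(G)} is an equilibrium of the system on G if and only if the restriction x|_{V(H)} is an equilibrium of the system on H and the restriction x|_{V(K)} is an equilibrium of the system on K. Consequently, if G is a connected graph with block decomposition G = G₁ ∪ ⋯ ∪ G_p, then x ∈ ℝ^{V(G)} is an equilibrium of G if and only if x|_{V(G_j)} is an equilibrium of G_j for every j. -/

import Mathlib

open scoped Classical

/-- A vertex `v` of a subgraph `B` is not a cut vertex: removing it leaves `B`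
either empty or connected. -/
def NoCutVertex {V : Type} {G : SimpleGraph V} (B : G.Subgraph) : Prop :=
  ∀ v ∈ B.verts, (B.deleteVerts {v}).verts = ∅ ∨ (B.deleteVerts {v}).coe.Connected

/-- A block of `G`: a maximal connected subgraph without cut vertices. -/
def IsBlock {V : Type} (G : SimpleGraph V) (B : G.Subgraph) : Prop :=
  B.coe.Connected ∧ NoCutVertex B ∧
    ∀ B' : G.Subgraph, B ≤ B' → B'.coe.Connected → NoCutVertex B' → B' = B

open SimpleGraph

section Helpers

variable {V : Type} {G : SimpleGraph V}

variable {V : Type} {G : SimpleGraph V}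

lemma SimpleGraph.Subgraph.Connected.sup {H K : G.Subgraph} (hH : H.Connected)
    (hK : K.Connected) (hn : (H ⊓ K).verts.Nonempty) : (H ⊔ K).Connected :=
  Subgraph.connected_sup hH.preconnected hK.preconnected hn

lemma del_sup (A C : G.Subgraph) (s : Set V) :
    (A ⊔ C).deleteVerts s = A.deleteVerts s ⊔ C.deleteVerts s := by
  ext v w
  · simp only [Subgraph.deleteVerts_verts, Subgraph.verts_sup, Set.union_diff_distrib,
      Set.mem_union]
  · simp only [Subgraph.deleteVerts_adj, Subgraph.sup_adj, Subgraph.verts_sup, Set.mem_union]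
    constructor
    · rintro ⟨hu, hus, hv', hvs, (h | h)⟩
      · exact Or.inl ⟨h.fst_mem, hus, h.snd_mem, hvs, h⟩
      · exact Or.inr ⟨h.fst_mem, hus, h.snd_mem, hvs, h⟩
    · rintro (⟨hu, hus, hv', hvs, h⟩ | ⟨hu, hus, hv', hvs, h⟩)
      · exact ⟨Or.inl hu, hus, Or.inl hv', hvs, Or.inl h⟩
      · exact ⟨Or.inr hu, hus, Or.inr hv', hvs, Or.inr h⟩

lemma del_of_not_mem (A : G.Subgraph) {v : V} (h : v ∉ A.verts) : A.deleteVerts {v} = A := by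
  ext a b
  · simp only [Subgraph.deleteVerts_verts, Set.mem_diff, Set.mem_singleton_iff]
    exact ⟨fun h' => h'.1, fun h' => ⟨h', fun he => h (he ▸ h')⟩⟩
  · simp only [Subgraph.deleteVerts_adj, Set.mem_singleton_iff]
    constructor
    · tauto
    · intro h'
      exact ⟨h'.fst_mem, fun he => h (he ▸ h'.fst_mem), h'.snd_mem,
        fun he => h (he ▸ h'.snd_mem), h'⟩

lemma sdel_start {a c : V} (h : G.Adj a c) :
    (G.subgraphOfAdj h).deleteVerts {a} = G.singletonSubgraph c := by
  ext v w
  · simp only [Subgraph.deleteVerts_verts, subgraphOfAdj_verts, singletonSubgraph_verts,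
      Set.mem_diff, Set.mem_insert_iff, Set.mem_singleton_iff]
    constructor
    · rintro ⟨(rfl | rfl), hv⟩
      · exact absurd rfl hv
      · rfl
    · rintro rfl; exact ⟨Or.inr rfl, fun he => h.ne' he⟩
  · simp only [Subgraph.deleteVerts_adj, singletonSubgraph_adj, Pi.bot_apply,
      Set.mem_singleton_iff]
    constructor
    · rintro ⟨_, hv, _, hw, hadj⟩
      rw [subgraphOfAdj_adj, Sym2.eq_iff] at hadj
      rcases hadj with ⟨rfl, rfl⟩ | ⟨rfl, rfl⟩
      · exact hv rfl
      · exact hw rfl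
    · exact fun h' => h'.elim

lemma Lfirst {a b : V} (r : G.Walk a b) (hr : r.IsPath) (hab : a ≠ b) :
    (r.toSubgraph.deleteVerts {a}).Connected ∧ b ∈ (r.toSubgraph.deleteVerts {a}).verts := by
  cases r with
  | nil => exact absurd rfl hab
  | @cons _ c _ h tail =>
    have hna : a ∉ tail.support := ((Walk.cons_isPath_iff h tail).mp hr).2
    have hnb : b ≠ a := fun he => hna (he ▸ tail.end_mem_support)
    have hts : (Walk.cons h tail).toSubgraph = G.subgraphOfAdj h ⊔ tail.toSubgraph := rfl
    rw [hts, del_sup, sdel_start h,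
      del_of_not_mem tail.toSubgraph (by rwa [Walk.mem_verts_toSubgraph])]
    have hle : G.singletonSubgraph c ≤ tail.toSubgraph := by
      rw [SimpleGraph.singletonSubgraph_le_iff]
      exact tail.start_mem_verts_toSubgraph
    rw [sup_eq_right.mpr hle]
    exact ⟨tail.toSubgraph_connected, tail.end_mem_verts_toSubgraph⟩

lemma Llast {a b : V} (r : G.Walk a b) (hr : r.IsPath) (hab : a ≠ b) :
    (r.toSubgraph.deleteVerts {b}).Connected ∧ a ∈ (r.toSubgraph.deleteVerts {b}).verts := by
  have h := Lfirst r.reverse hr.reverse (Ne.symm hab)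
  rwa [Walk.toSubgraph_reverse] at h

lemma block_del_connected {B : G.Subgraph} (hconn : B.coe.Connected) (hncv : NoCutVertex B)
    {a b : V} (ha : a ∈ B.verts) (hb : b ∈ B.verts) (hab : a ≠ b) (z : V) :
    (B.deleteVerts {z}).Connected := by
  by_cases hz : z ∈ B.verts
  · rcases hncv z hz with h | h
    · exfalso
      rw [Subgraph.deleteVerts_verts, Set.diff_eq_empty] at h
      exact hab ((h ha).trans (h hb).symm)
    · exact ⟨h⟩
  · rw [del_of_not_mem _ hz]; exact ⟨hconn⟩

lemma mem_del_verts {B : G.Subgraph} {a z : V} (ha : a ∈ B.verts) (haz : a ≠ z) :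
    a ∈ (B.deleteVerts {z}).verts := by
  rw [Subgraph.deleteVerts_verts]; exact ⟨ha, haz⟩

lemma ear {B : G.Subgraph} (hB : IsBlock G B) {i u : V} (hi : i ∈ B.verts) (hu : u ∈ B.verts)
    (hne : i ≠ u) (q : G.Walk i u) (hq : q.IsPath)
    (hsup : ∀ z ∈ q.support, z = i ∨ z = u ∨ z ∉ B.verts) :
    q.toSubgraph ≤ B := by
  have hconn : (B ⊔ q.toSubgraph).coe.Connected :=
    (Subgraph.Connected.sup ⟨hB.1⟩ q.toSubgraph_connected
      ⟨i, hi, q.start_mem_verts_toSubgraph⟩).coe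
  have hncv : NoCutVertex (B ⊔ q.toSubgraph) := by
    intro v _
    right
    rw [del_sup]
    by_cases hvq : v ∈ q.support
    · by_cases hvi : v = i
      · subst hvi
        obtain ⟨hc, hbmem⟩ := Lfirst q hq hne
        have hBc := block_del_connected hB.1 hB.2.1 hi hu hne v
        exact (Subgraph.Connected.sup hBc hc
          ⟨u, mem_del_verts hu (Ne.symm hne), hbmem⟩).coe
      by_cases hvu : v = u
      · subst hvu
        obtain ⟨hc, hbmem⟩ := Llast q hq hne
        have hBc := block_del_connected hB.1 hB.2.1 hi hu hne v
        exact (Subgraph.Connected.sup hBc hc ⟨i, mem_del_verts hi hne, hbmem⟩).coe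
      · -- interior vertex of the ear
        have hvB : v ∉ B.verts := by
          rcases hsup v hvq with h | h | h
          · exact absurd h hvi
          · exact absurd h hvu
          · exact h
        rw [del_of_not_mem B hvB]
        have hsplit : q.toSubgraph =
            (q.takeUntil v hvq).toSubgraph ⊔ (q.dropUntil v hvq).toSubgraph := by
          rw [← Walk.toSubgraph_append, q.take_spec hvq]
        rw [hsplit, del_sup, ← sup_assoc]
        obtain ⟨hpc, hip⟩ := Llast (q.takeUntil v hvq) (hq.takeUntil hvq)
          (fun h => hvi h.symm)
        obtain ⟨hsc, hus⟩ := Lfirst (q.dropUntil v hvq) (hq.dropUntil hvq) hvu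
        have h1 : (B ⊔ (q.takeUntil v hvq).toSubgraph.deleteVerts {v}).Connected :=
          Subgraph.Connected.sup ⟨hB.1⟩ hpc ⟨i, hi, hip⟩
        exact (Subgraph.Connected.sup h1 hsc ⟨u, Or.inl hu, hus⟩).coe
    · rw [del_of_not_mem q.toSubgraph (by rwa [Walk.mem_verts_toSubgraph])]
      have hBc := block_del_connected hB.1 hB.2.1 hi hu hne v
      have hiv : i ≠ v := fun h => hvq (h ▸ q.start_mem_support)
      exact (Subgraph.Connected.sup hBc q.toSubgraph_connected
        ⟨i, mem_del_verts hi hiv, q.start_mem_verts_toSubgraph⟩).coe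
  have heq := hB.2.2 _ le_sup_left hconn hncv
  calc q.toSubgraph ≤ B ⊔ q.toSubgraph := le_sup_right
    _ = B := heq

lemma adj_of_block {B : G.Subgraph} (hB : IsBlock G B) {i u : V} (hi : i ∈ B.verts)
    (hu : u ∈ B.verts) (h : G.Adj i u) : B.Adj i u := by
  have hq : (Walk.cons h Walk.nil).IsPath := by simp [h.ne]
  have hle := ear hB hi hu h.ne (Walk.cons h Walk.nil) hq
    (by intro z hz; simp only [Walk.support_cons, Walk.support_nil, List.mem_cons,
        List.mem_singleton, List.not_mem_nil, or_false] at hz; tauto)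
  exact hle.2 (by simp)

lemma isPath_concat {a b c : V} (p : G.Walk a b) (hp : p.IsPath) (h : G.Adj b c)
    (hc : c ∉ p.support) : (p.concat h).IsPath := by
  have : (p.concat h).reverse.IsPath := by
    rw [Walk.reverse_concat]
    rw [Walk.cons_isPath_iff]
    exact ⟨hp.reverse, by rwa [Walk.support_reverse, List.mem_reverse]⟩
  have h2 := this.reverse
  rwa [Walk.reverse_reverse] at h2

lemma block_unique {B1 B2 : G.Subgraph} (h1 : IsBlock G B1) (h2 : IsBlock G B2)
    {i u : V} (ha : B1.Adj i u) (hb : B2.Adj i u) : B1 = B2 := by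
  have hi1 := ha.fst_mem
  have hu1 := ha.snd_mem
  have hi2 := hb.fst_mem
  have hu2 := hb.snd_mem
  have hne : i ≠ u := ha.adj_sub.ne
  have hconn : (B1 ⊔ B2).coe.Connected :=
    (Subgraph.Connected.sup ⟨h1.1⟩ ⟨h2.1⟩ ⟨i, hi1, hi2⟩).coe
  have hncv : NoCutVertex (B1 ⊔ B2) := by
    intro v _
    right
    rw [del_sup]
    have c1 := block_del_connected h1.1 h1.2.1 hi1 hu1 hne v
    have c2 := block_del_connected h2.1 h2.2.1 hi2 hu2 hne v
    by_cases hvi : v = i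
    · subst hvi
      exact (Subgraph.Connected.sup c1 c2
        ⟨u, mem_del_verts hu1 (Ne.symm hne), mem_del_verts hu2 (Ne.symm hne)⟩).coe
    · exact (Subgraph.Connected.sup c1 c2
        ⟨i, mem_del_verts hi1 (fun h => hvi h.symm), mem_del_verts hi2 (fun h => hvi h.symm)⟩).coe
  exact (h1.2.2 _ le_sup_left hconn hncv).symm.trans (h2.2.2 _ le_sup_right hconn hncv)

lemma subgraph_eq_of_le_of_cards {B B' : G.Subgraph} [Fintype V] (hle : B ≤ B')
    (hv : B.verts.ncard = B'.verts.ncard) (he : B.edgeSet.ncard = B'.edgeSet.ncard) :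
    B = B' := by
  have hvs : B.verts = B'.verts :=
    Set.eq_of_subset_of_ncard_le hle.1 hv.ge (Set.toFinite _)
  have hes : B.edgeSet = B'.edgeSet :=
    Set.eq_of_subset_of_ncard_le (Subgraph.edgeSet_mono hle) he.ge (Set.toFinite _)
  ext v w
  · rw [hvs]
  · rw [← Subgraph.mem_edgeSet, ← Subgraph.mem_edgeSet, hes]

lemma exists_block_above [Fintype V] :
    ∀ (n : ℕ) (B : G.Subgraph), B.coe.Connected → NoCutVertex B →
      Fintype.card V + Fintype.card (Sym2 V) ≤ B.verts.ncard + B.edgeSet.ncard + n →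
      ∃ B', B ≤ B' ∧ IsBlock G B' := by
  intro n
  induction n with
  | zero =>
    intro B hc hncv hbound
    refine ⟨B, le_refl _, hc, hncv, fun B'' hle hc'' hncv'' => ?_⟩
    by_contra hne
    have hv := Set.ncard_le_ncard hle.1 (Set.toFinite _)
    have he := Set.ncard_le_ncard (Subgraph.edgeSet_mono hle) (Set.toFinite _)
    have hv' := Set.ncard_le_ncard (Set.subset_univ B''.verts) (Set.toFinite _)
    have he' := Set.ncard_le_ncard (Set.subset_univ B''.edgeSet) (Set.toFinite _)
    rw [Set.ncard_univ, Nat.card_eq_fintype_card] at hv' he'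
    have hvv : B.verts.ncard = B''.verts.ncard := by omega
    have hee : B.edgeSet.ncard = B''.edgeSet.ncard := by omega
    exact hne (subgraph_eq_of_le_of_cards hle hvv hee).symm
  | succ m ih =>
    intro B hc hncv hbound
    by_cases hmax : ∀ B'' : G.Subgraph, B ≤ B'' → B''.coe.Connected → NoCutVertex B'' → B'' = B
    · exact ⟨B, le_refl _, hc, hncv, hmax⟩
    · push_neg at hmax
      obtain ⟨B'', hle, hc'', hncv'', hne⟩ := hmax
      have hv := Set.ncard_le_ncard hle.1 (Set.toFinite _)
      have he := Set.ncard_le_ncard (Subgraph.edgeSet_mono hle) (Set.toFinite _)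
      have hlt : B.verts.ncard + B.edgeSet.ncard < B''.verts.ncard + B''.edgeSet.ncard := by
        rcases Nat.lt_or_ge (B.verts.ncard + B.edgeSet.ncard)
          (B''.verts.ncard + B''.edgeSet.ncard) with h | h
        · exact h
        · exfalso
          exact hne (subgraph_eq_of_le_of_cards hle (by omega) (by omega)).symm
      obtain ⟨B', hle', hB'⟩ := ih B'' hc'' hncv'' (by omega)
      exact ⟨B', hle.trans hle', hB'⟩

lemma exists_block_edge [Fintype V] {i u : V} (h : G.Adj i u) :
    ∃ B : G.Subgraph, IsBlock G B ∧ B.Adj i u := by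
  have hncv : NoCutVertex (G.subgraphOfAdj h) := by
    intro v hv
    right
    rcases hv with hv | hv
    · subst hv
      rw [sdel_start h]
      exact (Subgraph.singletonSubgraph_connected).coe
    · rw [Set.mem_singleton_iff] at hv
      subst hv
      rw [show G.subgraphOfAdj h = G.subgraphOfAdj h.symm from ?_, sdel_start h.symm]
      · exact (Subgraph.singletonSubgraph_connected).coe
      · ext a b
        · constructor <;> (rintro (rfl | rfl) <;> simp)
        · simp only [subgraphOfAdj_adj]
          constructor <;> (intro hh; rw [Sym2.eq_swap]; exact hh)
  obtain ⟨B, hle, hB⟩ := exists_block_above (Fintype.card V + Fintype.card (Sym2 V))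
    (G.subgraphOfAdj h) (Subgraph.subgraphOfAdj_connected h).coe hncv (by omega)
  exact ⟨B, hB, hle.2 (by simp)⟩

lemma sum_pairs_zero {α : Type*} (T : Finset α) (g : α → α → ℝ)
    (hg : ∀ a b, g a b = - g b a) : ∑ a ∈ T, ∑ b ∈ T, g a b = 0 := by
  have key : ∑ a ∈ T, ∑ b ∈ T, g a b = - ∑ a ∈ T, ∑ b ∈ T, g a b := by
    conv_lhs => rw [Finset.sum_comm]
    rw [← Finset.sum_neg_distrib]
    apply Finset.sum_congr rfl
    intro a _
    rw [← Finset.sum_neg_distrib]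
    apply Finset.sum_congr rfl
    intro b _
    exact hg b a
  linarith

lemma block_sum_zero [Fintype V] (f : ℝ → ℝ) (hodd : ∀ t : ℝ, f (-t) = -f t) (x : V → ℝ)
    (heq : ∀ i : V, ∑ j : V, (if G.Adj i j then f (x j - x i) else 0) = 0)
    {B : G.Subgraph} (hB : IsBlock G B) {i : V} (hi : i ∈ B.verts) :
    ∑ w : V, (if B.Adj i w then f (x w - x i) else 0) = 0 := by
  classical
  set g : V → V → ℝ := fun a b => if G.Adj a b then f (x b - x a) else 0 with hgdef
  have hganti : ∀ a b, g a b = - g b a := by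
    intro a b
    by_cases h : G.Adj a b
    · rw [hgdef]
      simp only [if_pos h, if_pos h.symm]
      rw [show x b - x a = -(x a - x b) by ring, hodd]
    · rw [hgdef]
      simp only [if_neg h, if_neg (fun (h' : G.Adj b a) => h h'.symm)]
      ring
  set D : Set V := {w | ∃ q : G.Walk i w, ∀ z ∈ q.support, z = i ∨ z ∉ B.verts} with hD
  have hiD : i ∈ D := ⟨Walk.nil, by simp⟩
  have hclose : ∀ w ∈ D, ∀ u : V, G.Adj w u → (u = i ∨ u ∉ B.verts) → u ∈ D := by
    rintro w ⟨q, hq⟩ u hadj hu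
    refine ⟨q.concat hadj, fun z hz => ?_⟩
    rw [Walk.support_concat, List.mem_append] at hz
    rcases hz with hz | hz
    · exact hq z hz
    · rw [List.mem_singleton] at hz; subst hz; exact hu
  have hear : ∀ w ∈ D, w ≠ i → ∀ u : V, G.Adj w u → u ∈ B.verts → u ≠ i → False := by
    rintro w ⟨q0, hq0⟩ hwi u hadj huB hui
    have hwB : w ∉ B.verts := (hq0 w q0.end_mem_support).resolve_left hwi
    have hp : q0.bypass.IsPath := q0.bypass_isPath
    have hps : ∀ z ∈ q0.bypass.support, z = i ∨ z ∉ B.verts :=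
      fun z hz => hq0 z (q0.support_bypass_subset hz)
    have hup : u ∉ q0.bypass.support := by
      intro h
      rcases hps u h with h' | h'
      · exact hui h'
      · exact h' huB
    have hqp : (q0.bypass.concat hadj).IsPath := isPath_concat _ hp hadj hup
    have hle := ear hB hi huB (Ne.symm hui) (q0.bypass.concat hadj) hqp ?_
    · have hwmem : w ∈ (q0.bypass.concat hadj).toSubgraph.verts := by
        rw [Walk.mem_verts_toSubgraph, Walk.support_concat,
          List.mem_append]
        exact Or.inl q0.bypass.end_mem_support
      exact hwB (hle.1 hwmem)
    · intro z hz
      rw [Walk.support_concat, List.mem_append] at hz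
      rcases hz with hz | hz
      · rcases hps z hz with h' | h'
        · exact Or.inl h'
        · exact Or.inr (Or.inr h')
      · rw [List.mem_singleton] at hz; subst hz; exact Or.inr (Or.inl rfl)
  set T : Finset V := Finset.univ.filter (· ∈ D) with hT
  set T' : Finset V := Finset.univ.filter (fun u => ¬ u ∈ D) with hT'
  have hiT : i ∈ T := by rw [hT]; simp [hiD]
  have h0 : ∑ w ∈ T, ∑ u : V, g w u = 0 := Finset.sum_eq_zero fun w _ => heq w
  have hsplit : ∀ w : V, ∑ u : V, g w u = (∑ u ∈ T, g w u) + ∑ u ∈ T', g w u := by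
    intro w
    rw [hT, hT', Finset.sum_filter_add_sum_filter_not]
  have h1 : ∑ w ∈ T, ∑ u ∈ T', g w u = 0 := by
    have h0' : ∑ w ∈ T, ((∑ u ∈ T, g w u) + ∑ u ∈ T', g w u) = 0 := by
      rw [← h0]; exact Finset.sum_congr rfl fun w _ => (hsplit w).symm
    rw [Finset.sum_add_distrib, sum_pairs_zero T g hganti, zero_add] at h0'
    exact h0'
  have h2 : ∑ u ∈ T', g i u = 0 := by
    rw [← h1]
    symm
    apply Finset.sum_eq_single_of_mem i hiT
    intro w hw hwi
    apply Finset.sum_eq_zero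
    intro u hu
    have hwD : w ∈ D := by rw [hT] at hw; simpa using hw
    have huD : ¬ u ∈ D := by rw [hT'] at hu; simpa using hu
    rw [hgdef]
    simp only
    rw [if_neg]
    intro hadj
    have huB : u ∈ B.verts ∧ u ≠ i := by
      by_contra hcon
      push_neg at hcon
      rcases Classical.em (u = i) with h' | h'
      · exact huD (h' ▸ hiD)
      · exact huD (hclose w hwD u hadj (Or.inr (fun hmem => h' (hcon hmem))))
    exact hear w hwD hwi u hadj huB.1 huB.2
  calc ∑ w : V, (if B.Adj i w then f (x w - x i) else 0)
      = ∑ u ∈ T', g i u := by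
        rw [hT', Finset.sum_filter]
        apply Finset.sum_congr rfl
        intro u _
        by_cases hBA : B.Adj i u
        · have huB := hBA.snd_mem
          have hune : u ≠ i := fun h => (h ▸ hBA).adj_sub.ne rfl
          have huD : ¬ u ∈ D := by
            intro h
            rcases (fun (hh : u ∈ D) => hh) h with ⟨q, hq⟩
            rcases hq u q.end_mem_support with h' | h'
            · exact hune h'
            · exact h' huB
          rw [if_pos hBA, if_pos huD, hgdef]
          simp only [if_pos hBA.adj_sub]
        · rw [if_neg hBA]
          by_cases huD : u ∈ D
          · rw [if_neg (by simpa using huD)]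
          · rw [if_pos huD, hgdef]
            simp only
            rw [if_neg]
            intro hadj
            have : u ∈ B.verts := by
              by_contra hmem
              exact huD (hclose i hiD u hadj (Or.inr hmem))
            exact hBA (adj_of_block hB hi this hadj)
    _ = 0 := h2

lemma part2 [Fintype V] (f : ℝ → ℝ) (hodd : ∀ t : ℝ, f (-t) = -f t)
    (p : ℕ) (Gs : Fin p → G.Subgraph)
    (hblocks : ∀ j, IsBlock G (Gs j))
    (hsurj : ∀ B : G.Subgraph, IsBlock G B → ∃ j, Gs j = B) (x : V → ℝ) :
    ((∀ i : V, ∑ j : V, (if G.Adj i j then f (x j - x i) else 0) = 0) ↔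
      ∀ j : Fin p, ∀ i ∈ (Gs j).verts,
        ∑ w : V, (if (Gs j).Adj i w then f (x w - x i) else 0) = 0) := by
  classical
  constructor
  · intro heq j i hi
    exact block_sum_zero f hodd x heq (hblocks j) hi
  · intro hyp i
    set Bset : Finset G.Subgraph := Finset.univ.image Gs with hBset
    have hmem_block : ∀ B ∈ Bset, IsBlock G B := by
      intro B hB
      rw [hBset, Finset.mem_image] at hB
      obtain ⟨j, _, rfl⟩ := hB
      exact hblocks j
    have claim : ∀ u : V, (if G.Adj i u then f (x u - x i) else 0)
        = ∑ B ∈ Bset, (if B.Adj i u then f (x u - x i) else 0) := by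
      intro u
      by_cases h : G.Adj i u
      · obtain ⟨Bs, hBs, hadjs⟩ := exists_block_edge h
        obtain ⟨j, hj⟩ := hsurj Bs hBs
        have hmem : Bs ∈ Bset := by
          rw [hBset, Finset.mem_image]; exact ⟨j, Finset.mem_univ j, hj⟩
        rw [if_pos h]
        symm
        rw [Finset.sum_eq_single_of_mem Bs hmem]
        · rw [if_pos hadjs]
        · intro B hB hne
          rw [if_neg]
          intro hadj
          exact hne (block_unique (hmem_block B hB) hBs hadj hadjs)
      · rw [if_neg h]
        symm
        apply Finset.sum_eq_zero
        intro B _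
        rw [if_neg (fun hadj => h (Subgraph.Adj.adj_sub hadj))]
    calc ∑ u : V, (if G.Adj i u then f (x u - x i) else 0)
        = ∑ u : V, ∑ B ∈ Bset, (if B.Adj i u then f (x u - x i) else 0) :=
          Finset.sum_congr rfl fun u _ => claim u
      _ = ∑ B ∈ Bset, ∑ u : V, (if B.Adj i u then f (x u - x i) else 0) := Finset.sum_comm
      _ = 0 := by
          apply Finset.sum_eq_zero
          intro B hB
          have hBs := hB
          rw [hBset, Finset.mem_image] at hBs
          obtain ⟨j, _, rfl⟩ := hBs
          by_cases hi : i ∈ (Gs j).verts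
          · exact hyp j i hi
          · apply Finset.sum_eq_zero
            intro u _
            rw [if_neg (fun hadj => hi hadj.fst_mem)]

lemma part1 [Fintype V] [DecidableEq V] (f : ℝ → ℝ) (hodd : ∀ t : ℝ, f (-t) = -f t)
    (VH VK : Finset V) (kv : V) (hcap : VH ∩ VK = {kv}) (hcup : VH ∪ VK = Finset.univ)
    (H : SimpleGraph {v // v ∈ VH}) (K : SimpleGraph {v // v ∈ VK})
    (G : SimpleGraph V)
    (hGadj : ∀ i j : V, G.Adj i j ↔
      ((∃ (hi : i ∈ VH) (hj : j ∈ VH), H.Adj ⟨i, hi⟩ ⟨j, hj⟩) ∨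
       (∃ (hi : i ∈ VK) (hj : j ∈ VK), K.Adj ⟨i, hi⟩ ⟨j, hj⟩)))
    (hdisj : ∀ (i j : V) (hiH : i ∈ VH) (hjH : j ∈ VH) (hiK : i ∈ VK) (hjK : j ∈ VK),
      ¬(H.Adj ⟨i, hiH⟩ ⟨j, hjH⟩ ∧ K.Adj ⟨i, hiK⟩ ⟨j, hjK⟩)) (x : V → ℝ) :
    ((∀ i : V, ∑ j : V, (if G.Adj i j then f (x j - x i) else 0) = 0) ↔
      ((∀ i : {v // v ∈ VH},
          ∑ j : {v // v ∈ VH}, (if H.Adj i j then f (x j - x i) else 0) = 0) ∧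
       (∀ i : {v // v ∈ VK},
          ∑ j : {v // v ∈ VK}, (if K.Adj i j then f (x j - x i) else 0) = 0))) := by
  classical
  set gH : V → V → ℝ := fun a b =>
    if h : a ∈ VH ∧ b ∈ VH then (if H.Adj ⟨a, h.1⟩ ⟨b, h.2⟩ then f (x b - x a) else 0) else 0
    with hgH
  set gK : V → V → ℝ := fun a b =>
    if h : a ∈ VK ∧ b ∈ VK then (if K.Adj ⟨a, h.1⟩ ⟨b, h.2⟩ then f (x b - x a) else 0) else 0
    with hgK
  have hA : ∀ iH : {v // v ∈ VH},
      (∑ j : {v // v ∈ VH}, if H.Adj iH j then f (x ↑j - x ↑iH) else 0)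
        = ∑ v : V, gH ↑iH v := by
    intro iH
    have e1 : ∀ j : {v // v ∈ VH},
        (if H.Adj iH j then f (x ↑j - x ↑iH) else 0) = gH ↑iH ↑j := by
      intro j
      rw [hgH]
      simp only
      rw [dif_pos ⟨iH.2, j.2⟩]
    rw [Finset.sum_congr rfl (fun j _ => e1 j), Finset.sum_coe_sort VH (gH ↑iH)]
    apply Finset.sum_subset (Finset.subset_univ VH)
    intro v _ hv
    rw [hgH]
    simp only
    rw [dif_neg (fun hc => hv hc.2)]
  have hA' : ∀ iK : {v // v ∈ VK},
      (∑ j : {v // v ∈ VK}, if K.Adj iK j then f (x ↑j - x ↑iK) else 0)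
        = ∑ v : V, gK ↑iK v := by
    intro iK
    have e1 : ∀ j : {v // v ∈ VK},
        (if K.Adj iK j then f (x ↑j - x ↑iK) else 0) = gK ↑iK ↑j := by
      intro j
      rw [hgK]
      simp only
      rw [dif_pos ⟨iK.2, j.2⟩]
    rw [Finset.sum_congr rfl (fun j _ => e1 j), Finset.sum_coe_sort VK (gK ↑iK)]
    apply Finset.sum_subset (Finset.subset_univ VK)
    intro v _ hv
    rw [hgK]
    simp only
    rw [dif_neg (fun hc => hv hc.2)]
  have hBt : ∀ a b : V, (if G.Adj a b then f (x b - x a) else 0) = gH a b + gK a b := by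
    intro a b
    by_cases h : G.Adj a b
    · rw [if_pos h]
      rcases (hGadj a b).mp h with ⟨ha, hb, hadj⟩ | ⟨ha, hb, hadj⟩
      · rw [hgH, hgK]
        simp only
        rw [dif_pos (show a ∈ VH ∧ b ∈ VH from ⟨ha, hb⟩), if_pos hadj]
        by_cases hk : a ∈ VK ∧ b ∈ VK
        · rw [dif_pos hk, if_neg, add_zero]
          exact fun hK => hdisj a b ha hb hk.1 hk.2 ⟨hadj, hK⟩
        · rw [dif_neg hk, add_zero]
      · rw [hgH, hgK]
        simp only
        rw [dif_pos (show a ∈ VK ∧ b ∈ VK from ⟨ha, hb⟩), if_pos hadj]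
        by_cases hk : a ∈ VH ∧ b ∈ VH
        · rw [dif_pos hk, if_neg, zero_add]
          exact fun hK => hdisj a b hk.1 hk.2 ha hb ⟨hK, hadj⟩
        · rw [dif_neg hk, zero_add]
    · rw [if_neg h]
      have h1 : gH a b = 0 := by
        rw [hgH]
        simp only
        split_ifs with h1 h2
        · exact absurd ((hGadj a b).mpr (Or.inl ⟨h1.1, h1.2, h2⟩)) h
        · rfl
        · rfl
      have h2 : gK a b = 0 := by
        rw [hgK]
        simp only
        split_ifs with h1 h2
        · exact absurd ((hGadj a b).mpr (Or.inr ⟨h1.1, h1.2, h2⟩)) h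
        · rfl
        · rfl
      rw [h1, h2, add_zero]
  have hB : ∀ i : V, (∑ j : V, if G.Adj i j then f (x j - x i) else 0)
      = (∑ v : V, gH i v) + ∑ v : V, gK i v := by
    intro i
    rw [← Finset.sum_add_distrib]
    exact Finset.sum_congr rfl fun v _ => hBt i v
  have hCH : ∀ i : V, i ∉ VH → ∑ v : V, gH i v = 0 := by
    intro i hi
    apply Finset.sum_eq_zero
    intro v _
    rw [hgH]
    simp only
    rw [dif_neg (fun hc => hi hc.1)]
  have hCK : ∀ i : V, i ∉ VK → ∑ v : V, gK i v = 0 := by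
    intro i hi
    apply Finset.sum_eq_zero
    intro v _
    rw [hgK]
    simp only
    rw [dif_neg (fun hc => hi hc.1)]
  have hantiH : ∀ a b : V, gH a b = - gH b a := by
    intro a b
    rw [hgH]
    simp only
    by_cases h : a ∈ VH ∧ b ∈ VH
    · rw [dif_pos h, dif_pos ⟨h.2, h.1⟩]
      by_cases hadj : H.Adj ⟨a, h.1⟩ ⟨b, h.2⟩
      · rw [if_pos hadj, if_pos hadj.symm, show x b - x a = -(x a - x b) by ring, hodd]
      · rw [if_neg hadj, if_neg (fun hh => hadj hh.symm), neg_zero]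
    · rw [dif_neg h, dif_neg (fun hc => h ⟨hc.2, hc.1⟩), neg_zero]
  have hantiK : ∀ a b : V, gK a b = - gK b a := by
    intro a b
    rw [hgK]
    simp only
    by_cases h : a ∈ VK ∧ b ∈ VK
    · rw [dif_pos h, dif_pos ⟨h.2, h.1⟩]
      by_cases hadj : K.Adj ⟨a, h.1⟩ ⟨b, h.2⟩
      · rw [if_pos hadj, if_pos hadj.symm, show x b - x a = -(x a - x b) by ring, hodd]
      · rw [if_neg hadj, if_neg (fun hh => hadj hh.symm), neg_zero]
    · rw [dif_neg h, dif_neg (fun hc => h ⟨hc.2, hc.1⟩), neg_zero]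
  have hkv : kv ∈ VH ∧ kv ∈ VK := by
    have : kv ∈ VH ∩ VK := by rw [hcap]; exact Finset.mem_singleton_self kv
    exact Finset.mem_inter.mp this
  have honly : ∀ i : V, i ∈ VH → i ∈ VK → i = kv := by
    intro i h1 h2
    have : i ∈ VH ∩ VK := Finset.mem_inter.mpr ⟨h1, h2⟩
    rw [hcap, Finset.mem_singleton] at this
    exact this
  constructor
  · intro heq
    have hne : ∀ i : V, i ∈ VH → i ≠ kv → ∑ v : V, gH i v = 0 := by
      intro i hiH hik
      have hiK : i ∉ VK := fun h => hik (honly i hiH h)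
      have := heq i
      rw [hB i, hCK i hiK, add_zero] at this
      exact this
    have hne' : ∀ i : V, i ∈ VK → i ≠ kv → ∑ v : V, gK i v = 0 := by
      intro i hiK hik
      have hiH : i ∉ VH := fun h => hik (honly i h hiK)
      have := heq i
      rw [hB i, hCH i hiH, zero_add] at this
      exact this
    have htotH : ∑ a : V, ∑ v : V, gH a v = 0 := sum_pairs_zero Finset.univ gH hantiH
    have hkvH : ∑ v : V, gH kv v = 0 := by
      rw [← htotH]
      symm
      apply Finset.sum_eq_single_of_mem kv (Finset.mem_univ kv)
      intro a _ hak
      by_cases haH : a ∈ VH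
      · exact hne a haH hak
      · exact hCH a haH
    have htotK : ∑ a : V, ∑ v : V, gK a v = 0 := sum_pairs_zero Finset.univ gK hantiK
    have hkvK : ∑ v : V, gK kv v = 0 := by
      rw [← htotK]
      symm
      apply Finset.sum_eq_single_of_mem kv (Finset.mem_univ kv)
      intro a _ hak
      by_cases haK : a ∈ VK
      · exact hne' a haK hak
      · exact hCK a haK
    constructor
    · intro iH
      rw [hA iH]
      by_cases h : (iH : V) = kv
      · rw [h]; exact hkvH
      · exact hne iH iH.2 h
    · intro iK
      rw [hA' iK]
      by_cases h : (iK : V) = kv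
      · rw [h]; exact hkvK
      · exact hne' iK iK.2 h
  · rintro ⟨hH, hK⟩ i
    rw [hB i]
    have e1 : ∑ v : V, gH i v = 0 := by
      by_cases h : i ∈ VH
      · rw [← hA ⟨i, h⟩]; exact hH ⟨i, h⟩
      · exact hCH i h
    have e2 : ∑ v : V, gK i v = 0 := by
      by_cases h : i ∈ VK
      · rw [← hA' ⟨i, h⟩]; exact hK ⟨i, h⟩
      · exact hCK i h
    rw [e1, e2, add_zero]

end Helpers

/-- (1) If `G` is the union of two finite connected graphs `H` and `K`
whose vertex sets meet in exactly one vertex and whose edge sets are disjoint, then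
`x` is an equilibrium of `G` iff its restrictions to `V(H)` and `V(K)` are equilibria
of `H` and `K`.  (2) Consequently, if `G` is connected with block decomposition
`G = G₁ ∪ ⋯ ∪ G_p`, then `x` is an equilibrium of `G` iff each restriction
`x|_{V(G_j)}` is an equilibrium of the block `G_j`. -/
theorem stmt_17 {V : Type} [Fintype V] [DecidableEq V]
    (f : ℝ → ℝ) (hodd : ∀ t : ℝ, f (-t) = -f t) :
    -- (1) gluing two connected graphs along a single vertex
    (∀ (VH VK : Finset V) (kv : V), VH ∩ VK = {kv} → VH ∪ VK = Finset.univ →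
      ∀ (H : SimpleGraph {v // v ∈ VH}) (K : SimpleGraph {v // v ∈ VK}),
        H.Connected → K.Connected →
      ∀ G : SimpleGraph V,
        (∀ i j : V, G.Adj i j ↔
          ((∃ (hi : i ∈ VH) (hj : j ∈ VH), H.Adj ⟨i, hi⟩ ⟨j, hj⟩) ∨
           (∃ (hi : i ∈ VK) (hj : j ∈ VK), K.Adj ⟨i, hi⟩ ⟨j, hj⟩))) →
        (∀ (i j : V) (hiH : i ∈ VH) (hjH : j ∈ VH) (hiK : i ∈ VK) (hjK : j ∈ VK),
          ¬(H.Adj ⟨i, hiH⟩ ⟨j, hjH⟩ ∧ K.Adj ⟨i, hiK⟩ ⟨j, hjK⟩)) →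
        ∀ x : V → ℝ,
          ((∀ i : V, ∑ j : V, (if G.Adj i j then f (x j - x i) else 0) = 0) ↔
            ((∀ i : {v // v ∈ VH},
                ∑ j : {v // v ∈ VH}, (if H.Adj i j then f (x j - x i) else 0) = 0) ∧
             (∀ i : {v // v ∈ VK},
                ∑ j : {v // v ∈ VK}, (if K.Adj i j then f (x j - x i) else 0) = 0)))) ∧
    -- (2) decomposition into the blocks of a connected graph
    (∀ G : SimpleGraph V, G.Connected →
      ∀ (p : ℕ) (Gs : Fin p → G.Subgraph),
        (∀ j, IsBlock G (Gs j)) →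
        (∀ B : G.Subgraph, IsBlock G B → ∃ j, Gs j = B) →
        ∀ x : V → ℝ,
          ((∀ i : V, ∑ j : V, (if G.Adj i j then f (x j - x i) else 0) = 0) ↔
            ∀ j : Fin p, ∀ i ∈ (Gs j).verts,
              ∑ w : V, (if (Gs j).Adj i w then f (x w - x i) else 0) = 0)) := by
  constructor
  · intro VH VK kv hcap hcup H K _ _ G hGadj hdisj x
    exact part1 f hodd VH VK kv hcap hcup H K G hGadj hdisj x
  · intro G _ p Gs hblocks hsurj x
    exact part2 f hodd p Gs hblocks hsurj x
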